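/- Let χ : ℝ³ × ℝ → ℝ³ be twice continuously differentiable with spatial derivative F(X,t) := D_X χ(X,t) invertible for all (X,t), and let v : ℝ³ × ℝ → ℝ³ be a differentiable field satisfying v(χ(X,t), t) = ∂ₜχ(X,t) for all (X,t). Let φ : ℝ³ × ℝ → ℝ be differentiable and satisfy the mass balance ∂ₜφ + div(φ v) = 0 everywhere. Then for each fixed X the function t ↦ det F(X,t) · φ(χ(X,t), t) is constant. -/

import Mathlib

noncomputable section

/-- The divergence of a vector field on ℝ³: the trace of its Fréchet derivative. -/
def div3 (w : EuclideanSpace ℝ (Fin 3) → EuclideanSpace ℝ (Fin 3))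
    (x : EuclideanSpace ℝ (Fin 3)) : ℝ :=
  LinearMap.trace ℝ (EuclideanSpace ℝ (Fin 3)) (fderiv ℝ w x).toLinearMap

section Helpers

abbrev E3 := EuclideanSpace ℝ (Fin 3)

def b3 : Module.Basis (Fin 3) ℝ E3 := (EuclideanSpace.basisFun (Fin 3) ℝ).toBasis

/-- The determinant as a function on continuous endomorphisms of `ℝ³`. -/
def cdet (A : E3 →L[ℝ] E3) : ℝ := LinearMap.det (A.toLinearMap)

def entriesₗ : (E3 →L[ℝ] E3) →ₗ[ℝ] (Fin 3 → Fin 3 → ℝ) where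
  toFun A := fun i j => LinearMap.toMatrix b3 b3 A.toLinearMap i j
  map_add' A B := by ext i j; simp
  map_smul' c A := by ext i j; simp

lemma differentiable_detPi :
    Differentiable ℝ (fun g : Fin 3 → Fin 3 → ℝ => Matrix.det (Matrix.of g)) := by
  simp only [Matrix.det_apply']
  apply Differentiable.fun_sum
  intro σ _
  apply Differentiable.const_mul
  intro g
  exact HasFDerivAt.differentiableAt <| HasFDerivAt.finset_prod
    (fun i _ => by
      have := (hasFDerivAt_apply (𝕜 := ℝ) i (g (σ i))).comp g (hasFDerivAt_apply (𝕜 := ℝ) (σ i) g); exact this)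

lemma cdet_eq (A : E3 →L[ℝ] E3) : cdet A = Matrix.det (Matrix.of (entriesₗ A)) := by
  rw [cdet, ← LinearMap.det_toMatrix b3 A.toLinearMap]
  rfl

lemma differentiable_cdet : Differentiable ℝ cdet := by
  have : cdet = (fun g : Fin 3 → Fin 3 → ℝ => Matrix.det (Matrix.of g)) ∘ entriesₗ := by
    funext A; exact cdet_eq A
  rw [this]
  exact differentiable_detPi.comp entriesₗ.toContinuousLinearMap.differentiable

/-- Jacobi's formula at an invertible point. -/
lemma fderiv_cdet_apply (A B : E3 →L[ℝ] E3) (hA : IsUnit A.toLinearMap) :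
    fderiv ℝ cdet A B
      = cdet A * LinearMap.trace ℝ E3 (↑hA.unit⁻¹ * B.toLinearMap) := by
  set M : E3 →ₗ[ℝ] E3 := ↑hA.unit⁻¹ * B.toLinearMap with hM
  set N : Matrix (Fin 3) (Fin 3) ℝ := LinearMap.toMatrix b3 b3 M with hN
  set P : Polynomial ℝ :=
    (Matrix.det (1 + (Polynomial.X : Polynomial ℝ) • N.map Polynomial.C)).divX.divX with hP
  have hline : HasDerivAt (fun s : ℝ => A + s • B) B 0 := by
    simpa using ((hasDerivAt_id (0:ℝ)).smul_const B).const_add A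
  have h1 : HasDerivAt (fun s : ℝ => cdet (A + s • B)) (fderiv ℝ cdet A B) 0 := by
    have := (differentiable_cdet (A + (0:ℝ) • B)).hasFDerivAt.comp_hasDerivAt 0 hline
    rw [show A + (0:ℝ) • B = A by rw [show ((0:ℝ) • B) = 0 from zero_smul ℝ B, add_zero]] at this
    exact this
  have key : ∀ s : ℝ, cdet (A + s • B)
      = cdet A * (1 + Matrix.trace N * s + Polynomial.eval s P * s ^ 2) := by
    intro s
    have hfac : (A + s • B).toLinearMap = A.toLinearMap * (1 + s • M) := by
      rw [hM, mul_add, mul_one, mul_smul_comm, ← mul_assoc, hA.mul_val_inv, one_mul]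
      rfl
    rw [cdet, hfac, map_mul]
    congr 1
    have : LinearMap.det (1 + s • M) = Matrix.det ((1 : Matrix (Fin 3) (Fin 3) ℝ) + s • N) := by
      rw [← LinearMap.det_toMatrix b3, map_add, map_smul, hN]
      congr 1
      simp
    rw [this, Matrix.det_one_add_smul, hP, hN]
  have h2 : HasDerivAt
      (fun s : ℝ => cdet A * (1 + Matrix.trace N * s + Polynomial.eval s P * s ^ 2))
      (cdet A * Matrix.trace N) 0 := by
    have ht : HasDerivAt (fun s : ℝ => 1 + Matrix.trace N * s + Polynomial.eval s P * s ^ 2)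
        (Matrix.trace N) 0 := by
      have hpoly : HasDerivAt (fun s : ℝ => Polynomial.eval s P * s ^ 2)
          (Polynomial.eval 0 (Polynomial.derivative P) * 0 ^ 2
            + Polynomial.eval 0 P * (↑2 * 0 ^ 1)) 0 :=
        (P.hasDerivAt 0).mul (hasDerivAt_pow 2 0)
      have hlin : HasDerivAt (fun s : ℝ => 1 + Matrix.trace N * s) (Matrix.trace N) 0 := by
        simpa using ((hasDerivAt_id (0:ℝ)).const_mul (Matrix.trace N)).const_add 1
      simpa using hlin.fun_add hpoly
    simpa using ht.const_mul (cdet A)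
  have hfun : (fun s : ℝ => cdet (A + s • B))
      = fun s : ℝ => cdet A * (1 + Matrix.trace N * s + Polynomial.eval s P * s ^ 2) :=
    funext key
  rw [hfun] at h1
  have := h1.unique h2
  rw [this, LinearMap.trace_eq_matrix_trace ℝ b3 M, hN]

lemma trace_smulRight (f : E3 →L[ℝ] ℝ) (u : E3) :
    LinearMap.trace ℝ E3 (f.smulRight u).toLinearMap = f u := by
  rw [LinearMap.trace_eq_matrix_trace ℝ b3, Matrix.trace]
  have : ∀ i, Matrix.diag (LinearMap.toMatrix b3 b3 (f.smulRight u).toLinearMap) i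
      = f (b3 i) * b3.repr u i := by
    intro i
    simp [Matrix.diag, LinearMap.toMatrix_apply, mul_comm]
  rw [Finset.sum_congr rfl (fun i _ => this i)]
  have hu : f u = f (∑ i, b3.repr u i • b3 i) := by rw [b3.sum_repr u]
  rw [hu, map_sum]
  simp [mul_comm]

end Helpers

set_option maxHeartbeats 1000000

/-- Existence of the referential volume fraction: for a `C²` motion `χ` with everywhere
invertible deformation gradient, Eulerian velocity `v` with `v(χ(X,t),t) = ∂ₜχ(X,t)`, and a
differentiable `φ` satisfying the mass balance `∂ₜφ + div(φ v) = 0` everywhere, the function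
`t ↦ det F(X,t) · φ(χ(X,t), t)` is constant for each fixed `X`. -/
theorem referential_volume_fraction_constant
    (χ : EuclideanSpace ℝ (Fin 3) × ℝ → EuclideanSpace ℝ (Fin 3))
    (hχ : ContDiff ℝ 2 χ)
    (hFinv : ∀ (X : EuclideanSpace ℝ (Fin 3)) (t : ℝ),
      IsUnit ((fderiv ℝ (fun Y => χ (Y, t)) X).toLinearMap))
    (v : EuclideanSpace ℝ (Fin 3) × ℝ → EuclideanSpace ℝ (Fin 3))
    (hv : Differentiable ℝ v)
    (hval : ∀ (X : EuclideanSpace ℝ (Fin 3)) (t : ℝ),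
      v (χ (X, t), t) = deriv (fun s => χ (X, s)) t)
    (φ : EuclideanSpace ℝ (Fin 3) × ℝ → ℝ)
    (hφ : Differentiable ℝ φ)
    (hmass : ∀ (x : EuclideanSpace ℝ (Fin 3)) (t : ℝ),
      deriv (fun s => φ (x, s)) t + div3 (fun y => φ (y, t) • v (y, t)) x = 0)
    (X : EuclideanSpace ℝ (Fin 3)) :
    ∀ t₁ t₂ : ℝ,
      LinearMap.det ((fderiv ℝ (fun Y => χ (Y, t₁)) X).toLinearMap) * φ (χ (X, t₁), t₁)
        = LinearMap.det ((fderiv ℝ (fun Y => χ (Y, t₂)) X).toLinearMap) * φ (χ (X, t₂), t₂) := by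
  intro t₁ t₂
  set inlE : E3 →L[ℝ] E3 × ℝ := ContinuousLinearMap.inl ℝ E3 ℝ with hinlE
  have hχd : Differentiable ℝ χ := hχ.differentiable (by norm_num)
  set Dχ : (E3 × ℝ) → (E3 × ℝ) →L[ℝ] E3 := fderiv ℝ χ with hDχdef
  have hDχd : Differentiable ℝ Dχ :=
    (hχ.fderiv_right (m := 1) (by norm_num)).differentiable one_ne_zero
  set F : ℝ → E3 →L[ℝ] E3 := fun t => fderiv ℝ (fun Y => χ (Y, t)) X with hFdef
  set q : ℝ → E3 × ℝ := fun t => (χ (X, t), t) with hqdef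
  set L : ℝ → E3 →L[ℝ] E3 := fun t => (fderiv ℝ v (q t)).comp inlE with hLdef
  set g : ℝ → ℝ := fun t => cdet (F t) * φ (q t) with hgdef
  -- partial spatial derivative of χ
  have hF : ∀ (Y : E3) (t : ℝ),
      HasFDerivAt (fun Y => χ (Y, t)) ((Dχ (Y, t)).comp inlE) Y := fun Y t =>
    (hχd (Y, t)).hasFDerivAt.comp Y (hasFDerivAt_prodMk_left Y t)
  -- partial time derivative of χ
  have hcurve : ∀ (Y : E3) (t : ℝ),
      HasDerivAt (fun s : ℝ => ((Y, s) : E3 × ℝ)) ((0 : E3), (1 : ℝ)) t := fun Y t =>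
    (hasDerivAt_const t Y).prodMk (hasDerivAt_id t)
  have hw : ∀ (Y : E3) (t : ℝ),
      HasDerivAt (fun s => χ (Y, s)) (Dχ (Y, t) ((0 : E3), (1 : ℝ))) t := fun Y t =>
    (hχd (Y, t)).hasFDerivAt.comp_hasDerivAt t (hcurve Y t)
  have hvq : ∀ t, v (q t) = Dχ (X, t) ((0 : E3), (1 : ℝ)) := by
    intro t
    rw [hqdef]
    simp only
    rw [hval X t, (hw X t).deriv]
  -- the key Euler expansion : HasDerivAt F ((L t).comp (F t)) t
  have hFt : ∀ t, F t = (Dχ (X, t)).comp inlE := fun t => (hF X t).fderiv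
  set Φc : ((E3 × ℝ) →L[ℝ] E3) →L[ℝ] (E3 →L[ℝ] E3) :=
    (ContinuousLinearMap.compL ℝ E3 (E3 × ℝ) E3).flip inlE with hΦc
  have hFeq : F = fun t => Φc (Dχ (X, t)) := by
    funext t; rw [hFt t]; rfl
  have hFhasDeriv : ∀ t, HasDerivAt F ((L t).comp (F t)) t := by
    intro t
    have hDcurve : HasDerivAt (fun s => Dχ (X, s)) (fderiv ℝ Dχ (X, t) ((0 : E3), (1 : ℝ))) t :=
      (hDχd (X, t)).hasFDerivAt.comp_hasDerivAt t (hcurve X t)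
    have h1 : HasDerivAt F (Φc (fderiv ℝ Dχ (X, t) ((0 : E3), (1 : ℝ)))) t := by
      rw [hFeq]
      exact Φc.hasFDerivAt.comp_hasDerivAt t hDcurve
    have hsym : IsSymmSndFDerivAt ℝ χ (X, t) :=
      (hχ.contDiffAt).isSymmSndFDerivAt (by simp [minSmoothness_of_isRCLikeNormedField])
    -- identify the derivative with (L t).comp (F t)
    have heqder : Φc (fderiv ℝ Dχ (X, t) ((0 : E3), (1 : ℝ))) = (L t).comp (F t) := by
      -- spatial derivative of both sides of hval
      have hf1 : HasFDerivAt (fun Y => v (χ (Y, t), t))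
          ((L t).comp (F t)) X := by
        have hinner : HasFDerivAt (fun Y => ((χ (Y, t), t) : E3 × ℝ))
            (((Dχ (X, t)).comp inlE).prod 0) X :=
          (hF X t).prodMk (hasFDerivAt_const t X)
        have := (hv (q t)).hasFDerivAt.comp X hinner
        refine this.congr_fderiv ?_
        rw [hLdef, hFt t]
        ext h
        simp [inlE]
      have hf2 : HasFDerivAt (fun Y => v (χ (Y, t), t))
          ((ContinuousLinearMap.apply ℝ E3 ((0 : E3), (1 : ℝ))).comp
            ((fderiv ℝ Dχ (X, t)).comp inlE)) X := by
        have hfun2 : (fun Y => v (χ (Y, t), t)) = fun Y => Dχ (Y, t) ((0 : E3), (1 : ℝ)) := by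
          funext Y
          rw [hval Y t, (hw Y t).deriv]
        rw [hfun2]
        have hDin : HasFDerivAt (fun Y => Dχ (Y, t)) ((fderiv ℝ Dχ (X, t)).comp inlE) X :=
          (hDχd (X, t)).hasFDerivAt.comp X (hasFDerivAt_prodMk_left X t)
        exact (ContinuousLinearMap.apply ℝ E3 ((0 : E3), (1 : ℝ))).hasFDerivAt.comp X hDin
      have huniq := hf2.unique hf1
      rw [← huniq]
      refine ContinuousLinearMap.ext fun h => ?_
      have := hsym (h, 0) ((0 : E3), (1 : ℝ))
      simpa [Φc, inlE, hDχdef] using this.symm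
    rw [← heqder]
    exact h1
  -- derivative of the determinant
  have hdet : ∀ t, HasDerivAt (fun t => cdet (F t))
      (cdet (F t) * LinearMap.trace ℝ E3 (L t).toLinearMap) t := by
    intro t
    have h1 := (differentiable_cdet (F t)).hasFDerivAt.comp_hasDerivAt t (hFhasDeriv t)
    have h2 := fderiv_cdet_apply (F t) ((L t).comp (F t)) (hFinv X t)
    rw [h2] at h1
    have htr : LinearMap.trace ℝ E3 (↑(hFinv X t).unit⁻¹ * ((L t).comp (F t)).toLinearMap)
        = LinearMap.trace ℝ E3 (L t).toLinearMap := by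
      have hco : ((L t).comp (F t)).toLinearMap = (L t).toLinearMap * (F t).toLinearMap := rfl
      rw [hco, LinearMap.trace_mul_comm, mul_assoc,
        show (F t).toLinearMap * ↑(hFinv X t).unit⁻¹ = 1 from (hFinv X t).mul_val_inv, mul_one]
    rw [htr] at h1
    exact h1
  -- derivative of φ along the motion
  have hφc : ∀ t, HasDerivAt (fun t => φ (q t))
      (fderiv ℝ φ (q t) (v (q t), (1 : ℝ))) t := by
    intro t
    have hq : HasDerivAt q ((v (q t), (1 : ℝ)) : E3 × ℝ) t := by
      rw [hvq t]
      exact (hw X t).prodMk (hasDerivAt_id t)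
    exact (hφ (q t)).hasFDerivAt.comp_hasDerivAt t hq
  -- mass balance in material form
  have hmass' : ∀ t, fderiv ℝ φ (q t) (v (q t), (1 : ℝ))
      = -(φ (q t) * LinearMap.trace ℝ E3 (L t).toLinearMap) := by
    intro t
    have hpt : deriv (fun s => φ (χ (X, t), s)) t = fderiv ℝ φ (q t) ((0 : E3), (1 : ℝ)) := by
      exact ((hφ (χ (X, t), t)).hasFDerivAt.comp_hasDerivAt t (hcurve (χ (X, t)) t)).deriv
    have hdiv : div3 (fun y => φ (y, t) • v (y, t)) (χ (X, t))
        = φ (q t) * LinearMap.trace ℝ E3 (L t).toLinearMap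
          + fderiv ℝ φ (q t) (v (q t), (0 : ℝ)) := by
      have hφ1 : HasFDerivAt (fun y => φ (y, t)) ((fderiv ℝ φ (q t)).comp inlE) (χ (X, t)) :=
        (hφ (χ (X, t), t)).hasFDerivAt.comp (χ (X, t)) (hasFDerivAt_prodMk_left (χ (X, t)) t)
      have hv1 : HasFDerivAt (fun y => v (y, t)) (L t) (χ (X, t)) :=
        (hv (χ (X, t), t)).hasFDerivAt.comp (χ (X, t)) (hasFDerivAt_prodMk_left (χ (X, t)) t)
      have hsm : HasFDerivAt (fun y => φ (y, t) • v (y, t))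
          (φ (q t) • L t + ((fderiv ℝ φ (q t)).comp inlE).smulRight (v (q t))) (χ (X, t)) :=
        hφ1.smul hv1
      rw [div3, hsm.fderiv, ContinuousLinearMap.coe_add, ContinuousLinearMap.coe_smul,
        map_add, map_smul, trace_smulRight, smul_eq_mul]
      congr 1
    have hm := hmass (χ (X, t)) t
    rw [hpt, hdiv] at hm
    have hsplit : fderiv ℝ φ (q t) (v (q t), (1 : ℝ))
        = fderiv ℝ φ (q t) (v (q t), (0 : ℝ)) + fderiv ℝ φ (q t) ((0 : E3), (1 : ℝ)) := by
      rw [← map_add]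
      congr 1
      simp
    rw [hsplit]
    linarith
  -- the product is constant
  have hg0 : ∀ t, HasDerivAt g 0 t := by
    intro t
    have := (hdet t).mul (hφc t)
    rw [hmass' t] at this
    refine this.congr_deriv ?_
    ring
  have hgd : Differentiable ℝ g := fun t => (hg0 t).differentiableAt
  have := is_const_of_deriv_eq_zero hgd (fun t => (hg0 t).deriv) t₁ t₂
  exact this
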